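/- Let A ⊆ (2^ω)^ω be a dense G_δ set. Then there exist nonempty perfect sets P_k ⊆ 2^ω (each homeomorphic to Cantor space) such that ∏_{k∈ω} P_k ⊆ A. -/

import Mathlib

open Set List

namespace Stmt11Aux

abbrev C := ℕ → Bool
abbrev X := ℕ → C

/-- `g` extends the finite string `L`. -/
def preL (L : List Bool) (g : ℕ → Bool) : Prop :=
  ∀ i, i < L.length → g i = L.getD i false

lemma getD_of_prefix {L L' : List Bool} (h : L <+: L') {i : ℕ} (hi : i < L.length) :
    L'.getD i false = L.getD i false := by
  rw [List.getD_eq_getElem L false hi,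
    List.getD_eq_getElem L' false (lt_of_lt_of_le hi h.length_le)]
  exact (h.getElem hi).symm

lemma preL_mono {L L' : List Bool} (h : L <+: L') {g : C} (hg : preL L' g) : preL L g := by
  intro i hi
  rw [hg i (lt_of_lt_of_le hi h.length_le), getD_of_prefix h hi]

lemma preL_self (L : List Bool) : preL L (fun i => L.getD i false) := fun _ _ => rfl

lemma getD_concat (L : List Bool) (b : Bool) : (L ++ [b]).getD L.length false = b := by
  rw [List.getD_eq_getElem (L ++ [b]) false (by simp)]
  exact List.getElem_concat_length rfl _

lemma isOpen_single (k i : ℕ) (c : Bool) : IsOpen {x : X | x k i = c} := by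
  have hc : Continuous fun x : X => x k i := (continuous_apply i).comp (continuous_apply k)
  exact (isOpen_discrete {c}).preimage hc

lemma isOpen_cyl (N : ℕ → List Bool) (b : ℕ) :
    IsOpen {x : X | ∀ k, k < b → preL (N k) (x k)} := by
  have : {x : X | ∀ k, k < b → preL (N k) (x k)} =
      ⋂ k ∈ Finset.range b, ⋂ i ∈ Finset.range (N k).length,
        {x : X | x k i = (N k).getD i false} := by
    ext x
    simp only [mem_setOf_eq, Set.mem_iInter, Finset.mem_range]
    exact ⟨fun h k hk i hi => h k hk i hi, fun h k hk i hi => h k hk i hi⟩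
  rw [this]
  exact isOpen_biInter_finset fun k _ =>
    isOpen_biInter_finset fun i _ => isOpen_single k i _

lemma basisC {U : Set C} (hU : IsOpen U) {z : C} (hz : z ∈ U) :
    ∃ M, ∀ g : C, (∀ i, i < M → g i = z i) → g ∈ U := by
  obtain ⟨I, u, h1, h2⟩ := isOpen_pi_iff.mp hU z hz
  refine ⟨I.sup (· + 1), fun g hg => h2 ?_⟩
  intro i hi
  have hiI : i < I.sup (· + 1) :=
    lt_of_lt_of_le (Nat.lt_succ_self i) (Finset.le_sup (f := (· + 1)) hi)
  rw [hg i hiI]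
  exact (h1 i hi).2

lemma basisX {U : Set X} (hU : IsOpen U) {z : X} (hz : z ∈ U) :
    ∃ M, ∀ x : X, (∀ k, k < M → ∀ i, i < M → x k i = z k i) → x ∈ U := by
  obtain ⟨I, u, h1, h2⟩ := isOpen_pi_iff.mp hU z hz
  have hM : ∀ k ∈ I, ∃ m, ∀ g : C, (∀ i, i < m → g i = z k i) → g ∈ u k := by
    intro k hk
    exact basisC (h1 k hk).1 (h1 k hk).2
  classical
  choose! m hm using hM
  refine ⟨I.sup (fun k => max (m k) (k + 1)), fun x hx => h2 ?_⟩
  intro k hk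
  have hsup : max (m k) (k + 1) ≤ I.sup (fun k => max (m k) (k + 1)) :=
    Finset.le_sup (f := fun k => max (m k) (k + 1)) hk
  have hk1 : k < I.sup (fun k => max (m k) (k + 1)) :=
    lt_of_lt_of_le (Nat.lt_succ_self k) (le_trans (le_max_right _ _) hsup)
  have hk2 : m k ≤ I.sup (fun k => max (m k) (k + 1)) :=
    le_trans (le_max_left _ _) hsup
  exact hm k hk (x k) fun i hi => hx k hk1 i (lt_of_lt_of_le hi hk2)

/-- Density extension: extend finitely supported constraints into a dense open set. -/
lemma ext_lemma {U : Set X} (hU : IsOpen U) (hd : Dense U) (b : ℕ) (N : ℕ → List Bool)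
    (hb : ∀ k, b ≤ k → N k = []) :
    ∃ (N' : ℕ → List Bool) (b' : ℕ), b ≤ b' ∧ (∀ k, N k <+: N' k) ∧
      (∀ k, b' ≤ k → N' k = []) ∧ {x : X | ∀ k, k < b' → preL (N' k) (x k)} ⊆ U := by
  classical
  -- the cylinder determined by N is open and nonempty
  have hV : IsOpen {x : X | ∀ k, k < b → preL (N k) (x k)} := isOpen_cyl N b
  have hVne : {x : X | ∀ k, k < b → preL (N k) (x k)}.Nonempty :=
    ⟨fun k i => (N k).getD i false, fun k _ => preL_self (N k)⟩
  obtain ⟨z, hzU, hzV⟩ := hd.exists_mem_open hV hVne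
  obtain ⟨M, hM⟩ := basisX hU hzU
  refine ⟨fun k => if k < max b M then List.ofFn (fun i : Fin (max M (N k).length) => z k i)
    else N k, max b M, le_max_left _ _, ?_, ?_, ?_⟩
  · intro k
    by_cases hk : k < max b M
    · simp only [hk, if_pos]
      by_cases hkb : k < b
      · -- N k is an initial segment of z k
        have hzk := hzV k hkb
        refine List.prefix_iff_eq_take.mpr ?_
        apply List.ext_getElem
        · simp [Nat.le_max_right M (N k).length]
        · intro i h1 h2
          simp only [List.getElem_take, List.getElem_ofFn]
          rw [← List.getD_eq_getElem (N k) false h1]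
          exact (hzk i h1).symm
      · rw [hb k (le_of_not_gt hkb)]
        exact List.nil_prefix
    · simp only [hk, if_neg, List.prefix_refl]
      exact List.prefix_rfl
  · intro k hk
    simp only [not_lt.mpr hk, if_false]
    exact hb k (le_trans (le_max_left _ _) hk)
  · intro x hx
    apply hM
    intro k hkM i hiM
    have hk : k < max b M := lt_of_lt_of_le hkM (le_max_right _ _)
    have := hx k hk
    simp only [hk, if_true] at this
    have hlen : i < (List.ofFn (fun i : Fin (max M (N k).length) => z k i)).length := by
      simp only [List.length_ofFn]
      exact lt_of_lt_of_le hiM (le_max_left _ _)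
    rw [this i hlen, List.getD_eq_getElem _ false hlen]
    simp


/-- node index for coordinate `k` selected by the pattern `u` at stage `n`. -/
def idx (n : ℕ) (u : Fin (n+1) → Fin (n+1) → Bool) (k : ℕ) : List Bool :=
  if h : k < n+1 then List.ofFn (fun i : Fin (n+1-k) => u ⟨k, h⟩ ⟨i, by omega⟩) else []

/-- Finite fusion over a list of patterns. -/
lemma fuse (n : ℕ) {U : Set X} (hU : IsOpen U) (hd : Dense U) :
    ∀ (l : List (Fin (n+1) → Fin (n+1) → Bool)) (Aa : ℕ → List Bool → List Bool) (b : ℕ),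
      (∀ k, b ≤ k → ∀ t, Aa k t = []) →
      ∃ (A' : ℕ → List Bool → List Bool) (b' : ℕ), b ≤ b' ∧
        (∀ k t, Aa k t <+: A' k t) ∧ (∀ k, b' ≤ k → ∀ t, A' k t = []) ∧
        ∀ u ∈ l, {x : X | ∀ k, preL (A' k (idx n u k)) (x k)} ⊆ U := by
  classical
  intro l
  induction l with
  | nil =>
    intro Aa b hb
    exact ⟨Aa, b, le_rfl, fun k t => List.prefix_rfl, hb, fun u hu => absurd hu (by simp)⟩
  | cons u l ih =>
    intro Aa b hb
    obtain ⟨N', b', hbb', hpre, hb', hsub⟩ :=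
      ext_lemma hU hd b (fun k => Aa k (idx n u k)) (fun k hk => hb k hk _)
    set A1 : ℕ → List Bool → List Bool :=
      fun k t => if t = idx n u k then N' k else Aa k t with hA1
    have hb1 : ∀ k, b' ≤ k → ∀ t, A1 k t = [] := by
      intro k hk t
      simp only [hA1]
      split
      · exact hb' k hk
      · exact hb k (le_trans hbb' hk) t
    obtain ⟨A2, b2, hb'b2, hpre2, hb2, hsub2⟩ := ih A1 b' hb1
    refine ⟨A2, b2, le_trans hbb' hb'b2, ?_, hb2, ?_⟩
    · intro k t
      refine List.IsPrefix.trans ?_ (hpre2 k t)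
      simp only [hA1]
      split
      · next h => rw [h]; exact hpre k
      · exact List.prefix_rfl
    · intro v hv
      rcases List.mem_cons.mp hv with rfl | hv
      · intro x hx
        apply hsub
        intro k hk
        have h1 : N' k <+: A2 k (idx n v k) := by
          have := hpre2 k (idx n v k)
          simpa only [hA1, if_pos rfl] using this
        exact preL_mono h1 (hx k)
      · exact hsub2 v hv
/-- One construction stage. -/
lemma stage_step (n : ℕ) {U : Set X} (hU : IsOpen U) (hd : Dense U)
    (Aa : ℕ → List Bool → List Bool) (b : ℕ) (hb : ∀ k, b ≤ k → ∀ t, Aa k t = []) :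
    ∃ (A' : ℕ → List Bool → List Bool) (b' : ℕ),
      (∀ k, b' ≤ k → ∀ t, A' k t = []) ∧
      (∀ k t c, k ≤ n → Aa k t ++ [c] <+: A' k (t ++ [c])) ∧
      (∀ k t, n < k → Aa k [] <+: A' k t) ∧
      (∀ u : Fin (n+1) → Fin (n+1) → Bool,
        {x : X | ∀ k, preL (A' k (idx n u k)) (x k)} ⊆ U) := by
  classical
  set A0 : ℕ → List Bool → List Bool :=
    fun k t => if k ≤ n then Aa k t.dropLast ++ [t.getLastD false] else Aa k [] with hA0
  have hb0 : ∀ k, max b (n+1) ≤ k → ∀ t, A0 k t = [] := by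
    intro k hk t
    have hkn : ¬ k ≤ n := by omega
    simp only [hA0, if_neg hkn]
    exact hb k (le_trans (le_max_left _ _) hk) []
  obtain ⟨A', b', _, hpre, hb', hall⟩ :=
    fuse n hU hd (Finset.univ : Finset (Fin (n+1) → Fin (n+1) → Bool)).toList A0
      (max b (n+1)) hb0
  refine ⟨A', b', hb', ?_, ?_, ?_⟩
  · intro k t c hk
    have := hpre k (t ++ [c])
    simpa only [hA0, if_pos hk, List.dropLast_concat, List.getLastD_concat] using this
  · intro k t hk
    have := hpre k t
    simpa only [hA0, if_neg (by omega : ¬ k ≤ n)] using this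
  · intro u
    exact hall u (Finset.mem_toList.mpr (Finset.mem_univ u))

/-- The full fusion system. -/
lemma exists_sys (U : ℕ → Set X) (hU : ∀ n, IsOpen (U n)) (hd : ∀ n, Dense (U n)) :
    ∃ E : ℕ → ℕ → List Bool → List Bool,
      (∀ n k t c, k ≤ n → E n k t ++ [c] <+: E (n+1) k (t ++ [c])) ∧
      (∀ n k t, n < k → E n k [] <+: E (n+1) k t) ∧
      (∀ n (u : Fin (n+1) → Fin (n+1) → Bool),
        {x : X | ∀ k, preL (E (n+1) k (idx n u k)) (x k)} ⊆ U n) := by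
  classical
  set St := {p : (ℕ → List Bool → List Bool) × ℕ // ∀ k, p.2 ≤ k → ∀ t, p.1 k t = []} with hSt
  have step : ∀ n (s : St), ∃ s' : St,
      (∀ k t c, k ≤ n → s.1.1 k t ++ [c] <+: s'.1.1 k (t ++ [c])) ∧
      (∀ k t, n < k → s.1.1 k [] <+: s'.1.1 k t) ∧
      (∀ u : Fin (n+1) → Fin (n+1) → Bool,
        {x : X | ∀ k, preL (s'.1.1 k (idx n u k)) (x k)} ⊆ U n) := by
    intro n s
    obtain ⟨A', b', h1, h2, h3, h4⟩ := stage_step n (hU n) (hd n) s.1.1 s.1.2 s.2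
    exact ⟨⟨(A', b'), h1⟩, h2, h3, h4⟩
  let F : ℕ → St := fun n =>
    Nat.rec ⟨((fun _ _ => []), 0), fun _ _ _ => rfl⟩
      (fun n s => Classical.choose (step n s)) n
  have hF : ∀ n, F (n+1) = Classical.choose (step n (F n)) := fun n => rfl
  refine ⟨fun n => (F n).1.1, ?_, ?_, ?_⟩
  · intro n k t c hk
    have := (Classical.choose_spec (step n (F n))).1 k t c hk
    rwa [← hF n] at this
  · intro n k t hk
    have := (Classical.choose_spec (step n (F n))).2.1 k t hk
    rwa [← hF n] at this
  · intro n u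
    have := (Classical.choose_spec (step n (F n))).2.2 u
    rwa [← hF n] at this


section Branches

variable (E : ℕ → ℕ → List Bool → List Bool)

/-- node of the `k`-th tree along branch `x` after `n` splittings (at stage `k + n`). -/
def fnode (k : ℕ) (x : C) (n : ℕ) : List Bool :=
  E (k + n) k (List.ofFn fun i : Fin n => x i)

/-- the branch map of the `k`-th tree. -/
def fmap (k : ℕ) (x : C) : C := fun m => (fnode E k x (m+1)).getD m false

lemma ofFn_snoc (x : C) (n : ℕ) :
    (List.ofFn fun i : Fin (n+1) => x i) = (List.ofFn fun i : Fin n => x i) ++ [x n] := by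
  rw [List.ofFn_succ']
  simp [List.concat_eq_append]

variable (hP1 : ∀ n k t c, k ≤ n → E n k t ++ [c] <+: E (n+1) k (t ++ [c]))
variable (hP2 : ∀ n k t, n < k → E n k [] <+: E (n+1) k t)

include hP1 in
lemma fnode_succ (k : ℕ) (x : C) (n : ℕ) :
    fnode E k x n ++ [x n] <+: fnode E k x (n+1) := by
  have h := hP1 (k+n) k (List.ofFn fun i : Fin n => x i) (x n) (Nat.le_add_right k n)
  rw [fnode, fnode, ofFn_snoc]
  exact h

include hP1 in
lemma fnode_mono (k : ℕ) (x : C) {m n : ℕ} (h : m ≤ n) :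
    fnode E k x m <+: fnode E k x n := by
  induction n, h using Nat.le_induction with
  | base => exact List.prefix_rfl
  | succ n hn ih =>
    exact ih.trans ((List.prefix_append _ _).trans (fnode_succ E hP1 k x n))

include hP1 in
lemma fnode_length (k : ℕ) (x : C) (n : ℕ) : n ≤ (fnode E k x n).length := by
  induction n with
  | zero => exact Nat.zero_le _
  | succ n ih =>
    have h := (fnode_succ E hP1 k x n).length_le
    simp only [List.length_append, List.length_cons, List.length_nil] at h
    omega

include hP1 in
lemma pre_fnode (k : ℕ) (x : C) (n : ℕ) : preL (fnode E k x n) (fmap E k x) := by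
  intro i hi
  show (fnode E k x (i+1)).getD i false = (fnode E k x n).getD i false
  rcases le_total (i+1) n with h | h
  · exact (getD_of_prefix (fnode_mono E hP1 k x h)
      (lt_of_lt_of_le (Nat.lt_succ_self i) (fnode_length E hP1 k x (i+1)))).symm
  · exact getD_of_prefix (fnode_mono E hP1 k x h) hi

lemma fnode_zero (k : ℕ) (x : C) : fnode E k x 0 = E k k [] := by
  simp [fnode]

lemma fmap_local (k : ℕ) (x x' : C) (m : ℕ) (h : ∀ j, j < m → x' j = x j) :
    ∀ i, i < m → fmap E k x' i = fmap E k x i := by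
  intro i hi
  have : (List.ofFn fun j : Fin (i+1) => x' j) = (List.ofFn fun j : Fin (i+1) => x j) :=
    congrArg List.ofFn (funext fun j => h j (by omega))
  show (fnode E k x' (i+1)).getD i false = (fnode E k x (i+1)).getD i false
  rw [fnode, fnode, this]

include hP1 in
lemma fmap_inj (k : ℕ) : Function.Injective (fmap E k) := by
  classical
  intro x y hxy
  by_contra hne
  have hex : ∃ m, x m ≠ y m := by
    by_contra h
    push_neg at h
    exact hne (funext h)
  set m := Nat.find hex with hmdef
  have hm : x m ≠ y m := Nat.find_spec hex
  have hlt : ∀ j, j < m → x j = y j := fun j hj => not_not.mp (Nat.find_min hex hj)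
  have heq : (List.ofFn fun i : Fin m => x i) = (List.ofFn fun i : Fin m => y i) :=
    congrArg List.ofFn (funext fun i => hlt i i.2)
  set L := E (k+m) k (List.ofFn fun i : Fin m => x i) with hL
  have hx1 : L ++ [x m] <+: fnode E k x (m+1) := fnode_succ E hP1 k x m
  have hy1 : L ++ [y m] <+: fnode E k y (m+1) := by
    have h := fnode_succ E hP1 k y m
    rw [fnode, ← heq, ← hL] at h
    -- the first occurrence is `fnode E k y m` which unfolds to `E (k+m) k (ofFn y)`
    exact h
  have key : ∀ (z : C), (L ++ [z m] <+: fnode E k z (m+1)) → fmap E k z L.length = z m := by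
    intro z hz
    have hlenz : L.length < (fnode E k z (m+1)).length :=
      lt_of_lt_of_le (by simp) hz.length_le
    have h := pre_fnode E hP1 k z (m+1) L.length hlenz
    rw [h, getD_of_prefix hz (by simp), getD_concat]
  exact hm (by rw [← key x hx1, ← key y hy1, hxy])

lemma fmap_cont (k : ℕ) : Continuous (fmap E k) := by
  apply continuous_pi
  intro m
  have h : (fun x : C => fmap E k x m) =
      (fun v : Fin (m+1) → Bool => (E (k+(m+1)) k (List.ofFn v)).getD m false) ∘
        (fun (x : C) (i : Fin (m+1)) => x (i : ℕ)) := rfl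
  rw [h]
  exact continuous_of_discreteTopology.comp (continuous_pi fun i => continuous_apply _)

include hP2 in
lemma stem_mono (k : ℕ) : ∀ {a b : ℕ}, a ≤ b → b ≤ k → E a k [] <+: E b k [] := by
  intro a b hab
  induction b, hab using Nat.le_induction with
  | base => intro _; exact List.prefix_rfl
  | succ n hn ih =>
    intro hk
    exact (ih (by omega)).trans (hP2 n k [] (by omega))

include hP1 hP2 in
lemma mem_cyl (n : ℕ) (y : X) (xs : ℕ → C) (hxs : ∀ k, fmap E k (xs k) = y k) :
    ∀ k, preL (E (n+1) k (idx n (fun k i => xs k i) k)) (y k) := by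
  intro k
  by_cases h : k < n+1
  · have hidx : idx n (fun (k : Fin (n+1)) (i : Fin (n+1)) => xs k i) k =
        List.ofFn (fun i : Fin (n+1-k) => xs k i) := by
      rw [idx, dif_pos h]
    have hE : fnode E k (xs k) (n+1-k) =
        E (n+1) k (List.ofFn (fun i : Fin (n+1-k) => xs k i)) := by
      rw [fnode, Nat.add_sub_cancel' (by omega : k ≤ n+1)]
    rw [hidx, ← hE, ← hxs k]
    exact pre_fnode E hP1 k (xs k) (n+1-k)
  · have hidx : idx n (fun (k : Fin (n+1)) (i : Fin (n+1)) => xs k i) k = [] := by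
      rw [idx, dif_neg h]
    rw [hidx, ← hxs k]
    have h1 : E (n+1) k [] <+: E k k [] := stem_mono E hP2 k (by omega) le_rfl
    rw [← fnode_zero E k (xs k)] at h1
    exact preL_mono h1 (pre_fnode E hP1 k (xs k) 0)

end Branches

end Stmt11Aux

theorem stmt11 (A : Set (ℕ → (ℕ → Bool))) (hdense : Dense A) (hGδ : IsGδ A) :
    ∃ P : ℕ → Set (ℕ → Bool),
      (∀ k, (P k).Nonempty ∧ Perfect (P k) ∧ Nonempty (P k ≃ₜ (ℕ → Bool))) ∧
      Set.pi Set.univ P ⊆ A := by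
  classical
  obtain ⟨U, hUopen, hAeq⟩ := hGδ.eq_iInter_nat
  have hUdense : ∀ n, Dense (U n) :=
    fun n => hdense.mono (by rw [hAeq]; exact Set.iInter_subset U n)
  obtain ⟨E, hP1, hP2, hP4⟩ := Stmt11Aux.exists_sys U hUopen hUdense
  refine ⟨fun k => Set.range (Stmt11Aux.fmap E k), fun k => ?_, ?_⟩
  · have hcont := Stmt11Aux.fmap_cont E k
    have hinj := Stmt11Aux.fmap_inj E hP1 k
    have hemb := hcont.isClosedEmbedding hinj
    refine ⟨⟨Stmt11Aux.fmap E k (fun _ => false), Set.mem_range_self _⟩,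
      ⟨hemb.isClosed_range, ?_⟩, ⟨hemb.toIsEmbedding.toHomeomorph.symm⟩⟩
    apply preperfect_iff_nhds.mpr
    rintro yy ⟨x, rfl⟩ V hV
    obtain ⟨W, hWV, hWopen, hxW⟩ := mem_nhds_iff.mp hV
    obtain ⟨M, hM⟩ := Stmt11Aux.basisC hWopen hxW
    refine ⟨Stmt11Aux.fmap E k (Function.update x M (!x M)),
      ⟨hWV (hM _ ?_), Set.mem_range_self _⟩, ?_⟩
    · exact fun i hi => Stmt11Aux.fmap_local E k x (Function.update x M (!x M)) M
        (fun j hj => Function.update_of_ne (by omega) _ x) i hi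
    · intro heq
      have h1 := hinj heq
      have h2 : Function.update x M (!x M) M = x M := by rw [h1]
      simp at h2
  · intro y hy
    rw [hAeq]
    refine Set.mem_iInter.mpr fun n => ?_
    have hy' : ∀ k, ∃ x, Stmt11Aux.fmap E k x = y k := fun k => hy k (Set.mem_univ k)
    choose xs hxs using hy'
    exact hP4 n (fun k i => xs k i) (Stmt11Aux.mem_cyl E hP1 hP2 n y xs hxs)
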